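/- Let A be an m×n real matrix with restricted isometry constants δ_q and let k be an even positive integer. Let h and z be k-sparse vectors in ℝⁿ, and let ŵ ∈ {0,1}ⁿ be a k-sparse binary vector such that supp(h) ⊆ supp(ŵ). Then ‖[(I − AᵀA)(h − z)] ⊗ ŵ‖₂ ≤ √5 · δ_k · ‖h − z‖₂. -/

import Mathlib

open Finset

noncomputable def nsq {ι : Type*} [Fintype ι] (x : ι → ℝ) : ℝ := ∑ i, (x i) ^ 2

noncomputable def n2 {ι : Type*} [Fintype ι] (x : ι → ℝ) : ℝ := Real.sqrt (nsq x)

noncomputable def supp {n : ℕ} (x : Fin n → ℝ) : Finset (Fin n) :=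
  Finset.univ.filter (fun i => x i ≠ 0)

def Sparse {n : ℕ} (k : ℕ) (x : Fin n → ℝ) : Prop := (supp x).card ≤ k

def restr {n : ℕ} (x : Fin n → ℝ) (T : Finset (Fin n)) : Fin n → ℝ :=
  fun i => if i ∈ T then x i else 0

def SatRIP {m n : ℕ} (A : Matrix (Fin m) (Fin n) ℝ) (q : ℕ) (δ : ℝ) : Prop :=
  ∀ z : Fin n → ℝ, Sparse q z →
    (1 - δ) * nsq z ≤ nsq (A.mulVec z) ∧ nsq (A.mulVec z) ≤ (1 + δ) * nsq z

/-- `δ` is the `q`-th order restricted isometry constant of `A`: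
the smallest `δ' ≥ 0` such that `(1-δ')‖z‖² ≤ ‖Az‖² ≤ (1+δ')‖z‖²` for all `q`-sparse `z`. -/
def IsRIC {m n : ℕ} (A : Matrix (Fin m) (Fin n) ℝ) (q : ℕ) (δ : ℝ) : Prop :=
  IsLeast {δ' : ℝ | 0 ≤ δ' ∧ SatRIP A q δ'} δ

/-- membership in `W^k`: binary vectors with exactly `k` entries equal to 1. -/
def InW {n : ℕ} (k : ℕ) (w : Fin n → ℝ) : Prop :=
  (∀ i, w i = 0 ∨ w i = 1) ∧ (Finset.univ.filter (fun i => w i = 1)).card = k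

/-- membership in the polytope `P^k`. -/
def InP {n : ℕ} (k : ℕ) (w : Fin n → ℝ) : Prop :=
  (∑ i, w i) = (k : ℝ) ∧ ∀ i, 0 ≤ w i ∧ w i ≤ 1

/-- `S` is an index set of the `k` largest absolute entries of `x`. -/
def IsTopK {n : ℕ} (x : Fin n → ℝ) (k : ℕ) (S : Finset (Fin n)) : Prop :=
  S.card = k ∧ ∀ i ∈ S, ∀ j ∉ S, |x j| ≤ |x i|

/-- `d` is a hard thresholding `H_k(z)` of `z`. -/
def IsHT {n : ℕ} (k : ℕ) (z d : Fin n → ℝ) : Prop :=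
  Sparse k d ∧ ∀ d' : Fin n → ℝ, Sparse k d' → n2 (z - d) ≤ n2 (z - d')

/-- `w 0, …, w (ω-1)` are successive compression minimizers at `x^p` (with `u^p = up`). -/
def SCM {m n : ℕ} (A : Matrix (Fin m) (Fin n) ℝ) (y : Fin m → ℝ) (k ω : ℕ)
    (up : Fin n → ℝ) (w : ℕ → Fin n → ℝ) : Prop :=
  ∀ j < ω, InP k (w j) ∧ ∀ v : Fin n → ℝ, InP k v →
    n2 (y - A.mulVec (up * (∏ l ∈ Finset.range j, w l) * w j)) ≤
    n2 (y - A.mulVec (up * (∏ l ∈ Finset.range j, w l) * v))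

/-- the `ℓ∞` norm of `x` restricted to `T` (zero if `T` is empty). -/
noncomputable def linfT {n : ℕ} (x : Fin n → ℝ) (T : Finset (Fin n)) : ℝ :=
  if h : T.Nonempty then T.sup' h (fun j => |x j|) else 0

open Matrix

lemma nsq_nonneg {ι : Type*} [Fintype ι] (x : ι → ℝ) : 0 ≤ nsq x :=
  Finset.sum_nonneg fun i _ => sq_nonneg _

lemma n2_nonneg {ι : Type*} [Fintype ι] (x : ι → ℝ) : 0 ≤ n2 x := Real.sqrt_nonneg _

lemma sq_n2 {ι : Type*} [Fintype ι] (x : ι → ℝ) : (n2 x) ^ 2 = nsq x :=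
  Real.sq_sqrt (nsq_nonneg x)

lemma eq_zero_of_n2 {ι : Type*} [Fintype ι] (x : ι → ℝ) (hx : n2 x = 0) : x = 0 := by
  have h0 : nsq x = 0 := by
    have := sq_n2 x; rw [hx] at this; simpa using this.symm
  funext i
  have := (Finset.sum_eq_zero_iff_of_nonneg (fun i _ => sq_nonneg (x i))).mp h0 i (Finset.mem_univ i)
  exact pow_eq_zero_iff (n := 2) (by norm_num) |>.mp this

lemma polar {ι : Type*} [Fintype ι] (a b : ι → ℝ) :
    nsq (a + b) - nsq (a - b) = 4 * (a ⬝ᵥ b) := by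
  simp only [nsq, dotProduct, Pi.add_apply, Pi.sub_apply, Finset.mul_sum,
    ← Finset.sum_sub_distrib]
  exact Finset.sum_congr rfl fun i _ => by ring

lemma prlgram {ι : Type*} [Fintype ι] (a b : ι → ℝ) :
    nsq (a + b) + nsq (a - b) = 2 * nsq a + 2 * nsq b := by
  simp only [nsq, Pi.add_apply, Pi.sub_apply, Finset.mul_sum, ← Finset.sum_add_distrib]
  exact Finset.sum_congr rfl fun i _ => by ring

lemma supp_add {n : ℕ} (x y : Fin n → ℝ) : supp (x + y) ⊆ supp x ∪ supp y := by
  intro i hi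
  simp only [supp, Finset.mem_filter, Finset.mem_univ, true_and, Pi.add_apply] at hi
  simp only [Finset.mem_union, supp, Finset.mem_filter, Finset.mem_univ, true_and]
  by_contra hc
  push_neg at hc
  simp [hc.1, hc.2] at hi

lemma supp_sub {n : ℕ} (x y : Fin n → ℝ) : supp (x - y) ⊆ supp x ∪ supp y := by
  intro i hi
  simp only [supp, Finset.mem_filter, Finset.mem_univ, true_and, Pi.sub_apply] at hi
  simp only [Finset.mem_union, supp, Finset.mem_filter, Finset.mem_univ, true_and]
  by_contra hc
  push_neg at hc
  simp [hc.1, hc.2] at hi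

lemma supp_smul {n : ℕ} (c : ℝ) (x : Fin n → ℝ) : supp (c • x) ⊆ supp x := by
  intro i hi
  simp only [supp, Finset.mem_filter, Finset.mem_univ, true_and, Pi.smul_apply,
    smul_eq_mul] at hi ⊢
  exact fun h0 => hi (by rw [h0, mul_zero])

lemma nsq_smul {ι : Type*} [Fintype ι] (c : ℝ) (x : ι → ℝ) : nsq (c • x) = c ^ 2 * nsq x := by
  simp only [nsq, Pi.smul_apply, smul_eq_mul, Finset.mul_sum]
  exact Finset.sum_congr rfl fun i _ => by ring

lemma rip_abs {m n : ℕ} {A : Matrix (Fin m) (Fin n) ℝ} {k : ℕ} {δ : ℝ}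
    (hA : SatRIP A k δ) {w : Fin n → ℝ} (hw : Sparse k w) :
    |nsq (A.mulVec w) - nsq w| ≤ δ * nsq w := by
  obtain ⟨h1, h2⟩ := hA w hw
  rw [abs_le]; constructor <;> nlinarith

/-- Key quadratic bound. -/
lemma key1 {m n : ℕ} {A : Matrix (Fin m) (Fin n) ℝ} {k : ℕ} {δ : ℝ}
    (hA : SatRIP A k δ) (x y : Fin n → ℝ)
    (hxy : (supp x ∪ supp y).card ≤ k) :
    |x ⬝ᵥ (((1 : Matrix (Fin n) (Fin n) ℝ) - Aᵀ * A).mulVec y)| ≤ δ / 2 * (nsq x + nsq y) := by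
  have hdot : x ⬝ᵥ (((1 : Matrix (Fin n) (Fin n) ℝ) - Aᵀ * A).mulVec y)
      = x ⬝ᵥ y - A.mulVec x ⬝ᵥ A.mulVec y := by
    rw [Matrix.sub_mulVec, Matrix.one_mulVec, dotProduct_sub]
    congr 1
    rw [← Matrix.mulVec_mulVec, Matrix.dotProduct_mulVec, Matrix.vecMul_transpose]
  have hsp : Sparse k (x + y) := le_trans (Finset.card_le_card (supp_add x y)) hxy
  have hsm : Sparse k (x - y) := le_trans (Finset.card_le_card (supp_sub x y)) hxy
  have e1 := rip_abs hA hsp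
  have e2 := rip_abs hA hsm
  rw [Matrix.mulVec_add] at e1
  rw [Matrix.mulVec_sub] at e2
  have p1 := polar x y
  have p2 := polar (A.mulVec x) (A.mulVec y)
  have q1 := prlgram x y
  rw [abs_le] at e1 e2 ⊢
  rw [hdot]
  have hq : δ * nsq (x + y) + δ * nsq (x - y) = δ * (2 * nsq x + 2 * nsq y) := by
    rw [← mul_add, q1]
  constructor <;> linarith [e1.1, e1.2, e2.1, e2.2, p1, p2, hq]

lemma key2 {m n : ℕ} {A : Matrix (Fin m) (Fin n) ℝ} {k : ℕ} {δ : ℝ}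
    (hA : SatRIP A k δ) (hδ0 : 0 ≤ δ) (x y : Fin n → ℝ)
    (hxy : (supp x ∪ supp y).card ≤ k) :
    |x ⬝ᵥ (((1 : Matrix (Fin n) (Fin n) ℝ) - Aᵀ * A).mulVec y)| ≤ δ * n2 x * n2 y := by
  rcases eq_or_lt_of_le (n2_nonneg x) with hx | hx
  · have hx0 : x = 0 := eq_zero_of_n2 x hx.symm
    rw [hx0, zero_dotProduct, abs_zero]
    exact mul_nonneg (mul_nonneg hδ0 (n2_nonneg _)) (n2_nonneg _)
  rcases eq_or_lt_of_le (n2_nonneg y) with hy | hy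
  · have hy0 : y = 0 := eq_zero_of_n2 y hy.symm
    rw [hy0]
    rw [show ((1 : Matrix (Fin n) (Fin n) ℝ) - Aᵀ * A).mulVec 0 = 0 from Matrix.mulVec_zero _,
      dotProduct_zero, abs_zero]
    exact mul_nonneg (mul_nonneg hδ0 (n2_nonneg _)) (n2_nonneg _)
  set c : ℝ := Real.sqrt (n2 y / n2 x) with hc
  have hcpos : 0 < c := Real.sqrt_pos.mpr (div_pos hy hx)
  have hc2 : c ^ 2 = n2 y / n2 x := Real.sq_sqrt (le_of_lt (div_pos hy hx))
  have hsub : (supp (c • x) ∪ supp (c⁻¹ • y)).card ≤ k := by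
    refine le_trans (Finset.card_le_card ?_) hxy
    exact Finset.union_subset_union (supp_smul c x) (supp_smul c⁻¹ y)
  have key := key1 hA (c • x) (c⁻¹ • y) hsub
  have h1 : (c • x) ⬝ᵥ (((1 : Matrix (Fin n) (Fin n) ℝ) - Aᵀ * A).mulVec (c⁻¹ • y))
      = x ⬝ᵥ (((1 : Matrix (Fin n) (Fin n) ℝ) - Aᵀ * A).mulVec y) := by
    rw [Matrix.mulVec_smul, smul_dotProduct, dotProduct_smul, smul_smul,
      mul_inv_cancel₀ hcpos.ne', one_smul]
  rw [h1, nsq_smul, nsq_smul] at key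
  have hinv : (c⁻¹) ^ 2 = n2 x / n2 y := by
    rw [inv_pow, hc2, inv_div]
  rw [hc2, hinv, ← sq_n2 x, ← sq_n2 y] at key
  have heq : δ / 2 * (n2 y / n2 x * n2 x ^ 2 + n2 x / n2 y * n2 y ^ 2) = δ * n2 x * n2 y := by
    field_simp
    ring
  exact key.trans_eq heq

lemma supp_restr {n : ℕ} (x : Fin n → ℝ) (T : Finset (Fin n)) : supp (restr x T) ⊆ T := by
  intro i hi
  simp only [supp, restr, Finset.mem_filter, Finset.mem_univ, true_and] at hi
  by_contra hc
  simp [hc] at hi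

lemma restr_decomp {n : ℕ} (x : Fin n → ℝ) (S T : Finset (Fin n)) (hd : Disjoint S T)
    (hs : supp x ⊆ S ∪ T) : x = restr x S + restr x T := by
  funext i
  simp only [Pi.add_apply, restr]
  by_cases hS : i ∈ S
  · have hT : i ∉ T := fun hT => (Finset.disjoint_left.mp hd hS) hT
    simp [hS, hT]
  · by_cases hT : i ∈ T
    · simp [hS, hT]
    · have : i ∉ supp x := fun hi => by
        rcases Finset.mem_union.mp (hs hi) with h | h
        exacts [hS h, hT h]
      simp only [supp, Finset.mem_filter, Finset.mem_univ, true_and, not_not] at this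
      simp [hS, hT, this]

lemma nsq_decomp {n : ℕ} (x : Fin n → ℝ) (S T : Finset (Fin n)) (hd : Disjoint S T)
    (hs : supp x ⊆ S ∪ T) : nsq x = nsq (restr x S) + nsq (restr x T) := by
  simp only [nsq, ← Finset.sum_add_distrib]
  refine Finset.sum_congr rfl fun i _ => ?_
  simp only [restr]
  by_cases hS : i ∈ S
  · have hT : i ∉ T := fun hT => (Finset.disjoint_left.mp hd hS) hT
    simp [hS, hT]
  · by_cases hT : i ∈ T
    · simp [hS, hT]
    · have : x i = 0 := by
        by_contra hne
        have : i ∈ supp x := by simp [supp, hne]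
        rcases Finset.mem_union.mp (hs this) with h | h
        exacts [hS h, hT h]
      simp [hS, hT, this]

lemma finset_split {n : ℕ} (C : Finset (Fin n)) (t : ℕ) (h : C.card ≤ 2 * t) :
    ∃ C1 C2 : Finset (Fin n), C1 ∪ C2 = C ∧ Disjoint C1 C2 ∧ C1.card ≤ t ∧ C2.card ≤ t := by
  by_cases hc : C.card ≤ t
  · exact ⟨C, ∅, Finset.union_empty C, Finset.disjoint_empty_right C, hc, by simp⟩
  · push_neg at hc
    obtain ⟨C1, hC1sub, hC1card⟩ := Finset.exists_subset_card_eq (s := C) hc.le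
    refine ⟨C1, C \ C1, Finset.union_sdiff_of_subset hC1sub, Finset.disjoint_sdiff, hC1card.le, ?_⟩
    rw [Finset.card_sdiff_of_subset hC1sub, hC1card]
    omega

lemma sqrt_sum_le {p q r : ℝ} (hp : 0 ≤ p) (hq : 0 ≤ q) (hr : 0 ≤ r)
    (h : p ^ 2 + q ^ 2 = r ^ 2) : p + q ≤ Real.sqrt 2 * r := by
  have h2 : (p + q) ^ 2 ≤ 2 * r ^ 2 := by nlinarith [sq_nonneg (p - q)]
  calc p + q = Real.sqrt ((p + q) ^ 2) := (Real.sqrt_sq (by linarith)).symm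
    _ ≤ Real.sqrt (2 * r ^ 2) := Real.sqrt_le_sqrt h2
    _ = Real.sqrt 2 * r := by
        rw [Real.sqrt_mul (by norm_num), Real.sqrt_sq hr]

lemma sqrt5_bound {a b r : ℝ} (ha : 0 ≤ a) (hb : 0 ≤ b) (hr : 0 ≤ r)
    (h : a ^ 2 + b ^ 2 = r ^ 2) : a + 2 * b ≤ Real.sqrt 5 * r := by
  have h2 : (a + 2 * b) ^ 2 ≤ 5 * r ^ 2 := by nlinarith [sq_nonneg (2 * a - b)]
  calc a + 2 * b = Real.sqrt ((a + 2 * b) ^ 2) := (Real.sqrt_sq (by linarith)).symm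
    _ ≤ Real.sqrt (5 * r ^ 2) := Real.sqrt_le_sqrt h2
    _ = Real.sqrt 5 * r := by
        rw [Real.sqrt_mul (by norm_num), Real.sqrt_sq hr]

lemma restr_restr {n : ℕ} (x : Fin n → ℝ) {T T' : Finset (Fin n)} (h : T' ⊆ T) :
    restr (restr x T) T' = restr x T' := by
  funext i
  simp only [restr]
  by_cases hi : i ∈ T'
  · simp [hi, h hi]
  · simp [hi]

theorem stmt1 {m n : ℕ} (A : Matrix (Fin m) (Fin n) ℝ)
    (k : ℕ) (hk : 0 < k) (hke : Even k)
    (δk : ℝ) (hδ : IsRIC A k δk)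
    (h z wh : Fin n → ℝ) (hh : Sparse k h) (hz : Sparse k z)
    (hwh01 : ∀ i, wh i = 0 ∨ wh i = 1) (hwhk : Sparse k wh)
    (hsupp : supp h ⊆ supp wh) :
    n2 ((((1 : Matrix (Fin n) (Fin n) ℝ) - A.transpose * A).mulVec (h - z)) * wh)
      ≤ Real.sqrt 5 * δk * n2 (h - z) := by
  obtain ⟨hδ0, hA⟩ := hδ.1
  obtain ⟨t, ht⟩ := hke
  have hkt : k = 2 * t := by omega
  set B : Matrix (Fin n) (Fin n) ℝ := (1 : Matrix (Fin n) (Fin n) ℝ) - Aᵀ * A with hB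
  set u : Fin n → ℝ := h - z with hu
  set S : Finset (Fin n) := supp wh with hS
  have hScard : S.card ≤ k := hwhk
  set T : Finset (Fin n) := supp u \ S with hT
  have hdST : Disjoint S T := Finset.disjoint_sdiff
  have hsuppu : supp u ⊆ S ∪ T := by
    intro i hi
    by_cases hiS : i ∈ S
    · exact Finset.mem_union_left _ hiS
    · exact Finset.mem_union_right _ (Finset.mem_sdiff.mpr ⟨hi, hiS⟩)
  have hTz : T ⊆ supp z := by
    intro i hi
    obtain ⟨hiu, hiS⟩ := Finset.mem_sdiff.mp hi
    have hhi : h i = 0 := by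
      by_contra hne
      exact hiS (hsupp (by simp [supp, hne]))
    simp only [supp, Finset.mem_filter, Finset.mem_univ, true_and] at hiu ⊢
    intro hzi
    apply hiu
    simp [hu, Pi.sub_apply, hhi, hzi]
  have hTcard : T.card ≤ k := le_trans (Finset.card_le_card hTz) hz
  -- split S and T in halves
  obtain ⟨S1, S2, hSu, hSd, hS1, hS2⟩ := finset_split S t (hkt ▸ hScard)
  obtain ⟨T1, T2, hTu, hTd, hT1, hT2⟩ := finset_split T t (hkt ▸ hTcard)
  set v : Fin n → ℝ := restr (B.mulVec u) S with hv
  have hgoal_eq : (B.mulVec u) * wh = v := by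
    funext i
    simp only [Pi.mul_apply, hv, restr]
    by_cases hiS : i ∈ S
    · have : wh i = 1 := by
        rcases hwh01 i with h0 | h1
        · exact absurd h0 (by simpa [hS, supp] using hiS)
        · exact h1
      simp [hiS, this]
    · have : wh i = 0 := by
        rcases hwh01 i with h0 | h1
        · exact h0
        · exact absurd (by simp [hS, supp, h1] : i ∈ S) hiS
      simp [hiS, this]
  rw [hgoal_eq]
  -- abbreviations for the pieces
  set uS : Fin n → ℝ := restr u S with huS
  set uT : Fin n → ℝ := restr u T with huT
  set uT1 : Fin n → ℝ := restr u T1 with huT1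
  set uT2 : Fin n → ℝ := restr u T2 with huT2
  set v1 : Fin n → ℝ := restr v S1 with hv1
  set v2 : Fin n → ℝ := restr v S2 with hv2
  have hsuppv : supp v ⊆ S := supp_restr _ _
  have hT1T : T1 ⊆ T := hTu ▸ Finset.subset_union_left
  have hT2T : T2 ⊆ T := hTu ▸ Finset.subset_union_right
  have huTsplit : uT = uT1 + uT2 := by
    rw [huT1, huT2, ← restr_restr u hT1T, ← restr_restr u hT2T]
    exact restr_decomp (restr u T) T1 T2 hTd (hTu ▸ supp_restr _ _)
  have hu3 : u = uS + (uT1 + uT2) := by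
    rw [← huTsplit]
    exact restr_decomp u S T hdST hsuppu
  have hvsplit : v = v1 + v2 := restr_decomp v S1 S2 hSd (hSu ▸ hsuppv)
  -- norm decompositions
  have hnsq_u : nsq u = nsq uS + nsq uT := nsq_decomp u S T hdST hsuppu
  have hnsq_uT : nsq uT = nsq uT1 + nsq uT2 := by
    rw [huT1, huT2, ← restr_restr u hT1T, ← restr_restr u hT2T]
    exact nsq_decomp (restr u T) T1 T2 hTd (hTu ▸ supp_restr _ _)
  have hnsq_v : nsq v = nsq v1 + nsq v2 := nsq_decomp v S1 S2 hSd (hSu ▸ hsuppv)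
  -- nsq v = v ⬝ᵥ B u
  have hdotv : nsq v = v ⬝ᵥ B.mulVec u := by
    simp only [nsq, dotProduct]
    refine Finset.sum_congr rfl fun i _ => ?_
    by_cases hiS : i ∈ S
    · have : v i = B.mulVec u i := by simp [hv, restr, hiS]
      rw [this]; ring
    · have : v i = 0 := by simp [hv, restr, hiS]
      rw [this]; ring
  -- expansion
  have e0 : nsq v = v ⬝ᵥ B.mulVec uS + ((v1 ⬝ᵥ B.mulVec uT1 + v2 ⬝ᵥ B.mulVec uT1)
      + (v1 ⬝ᵥ B.mulVec uT2 + v2 ⬝ᵥ B.mulVec uT2)) := by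
    have c1 : v ⬝ᵥ B.mulVec uT1 = v1 ⬝ᵥ B.mulVec uT1 + v2 ⬝ᵥ B.mulVec uT1 := by
      conv_lhs => rw [hvsplit]
      rw [add_dotProduct]
    have c2 : v ⬝ᵥ B.mulVec uT2 = v1 ⬝ᵥ B.mulVec uT2 + v2 ⬝ᵥ B.mulVec uT2 := by
      conv_lhs => rw [hvsplit]
      rw [add_dotProduct]
    rw [hdotv]
    conv_lhs => rw [hu3]
    rw [Matrix.mulVec_add, Matrix.mulVec_add, dotProduct_add, dotProduct_add,
      c1, c2]
  -- cardinality facts for key2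
  have hcard0 : (supp v ∪ supp uS).card ≤ k := by
    refine le_trans (Finset.card_le_card ?_) hScard
    exact Finset.union_subset hsuppv (supp_restr _ _)
  have hcard : ∀ (Si Ti : Finset (Fin n)), Si.card ≤ t → Ti.card ≤ t →
      (supp (restr v Si) ∪ supp (restr u Ti)).card ≤ k := by
    intro Si Ti hSi hTi
    refine le_trans (Finset.card_le_card
      (Finset.union_subset_union (supp_restr _ _) (supp_restr _ _))) ?_
    calc (Si ∪ Ti).card ≤ Si.card + Ti.card := Finset.card_union_le _ _
      _ ≤ t + t := add_le_add hSi hTi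
      _ = k := by omega
  -- apply key2
  have b0 : |v ⬝ᵥ B.mulVec uS| ≤ δk * n2 v * n2 uS := key2 hA hδ0 v uS hcard0
  have b11 : |v1 ⬝ᵥ B.mulVec uT1| ≤ δk * n2 v1 * n2 uT1 := key2 hA hδ0 v1 uT1 (hcard S1 T1 hS1 hT1)
  have b21 : |v2 ⬝ᵥ B.mulVec uT1| ≤ δk * n2 v2 * n2 uT1 := key2 hA hδ0 v2 uT1 (hcard S2 T1 hS2 hT1)
  have b12 : |v1 ⬝ᵥ B.mulVec uT2| ≤ δk * n2 v1 * n2 uT2 := key2 hA hδ0 v1 uT2 (hcard S1 T2 hS1 hT2)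
  have b22 : |v2 ⬝ᵥ B.mulVec uT2| ≤ δk * n2 v2 * n2 uT2 := key2 hA hδ0 v2 uT2 (hcard S2 T2 hS2 hT2)
  clear_value B u v uS uT uT1 uT2 v1 v2
  have l0 := (le_abs_self _).trans b0
  have l11 := (le_abs_self _).trans b11
  have l21 := (le_abs_self _).trans b21
  have l12 := (le_abs_self _).trans b12
  have l22 := (le_abs_self _).trans b22
  have step1 : nsq v ≤ δk * (n2 v * n2 uS) + (n2 v1 + n2 v2) * (δk * (n2 uT1 + n2 uT2)) := by
    rw [e0]; nlinarith [l0, l11, l21, l12, l22]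
  -- sqrt 2 bounds
  have hvs : n2 v1 + n2 v2 ≤ Real.sqrt 2 * n2 v :=
    sqrt_sum_le (n2_nonneg _) (n2_nonneg _) (n2_nonneg _)
      (by rw [sq_n2, sq_n2, sq_n2, hnsq_v])
  have huts : n2 uT1 + n2 uT2 ≤ Real.sqrt 2 * n2 uT :=
    sqrt_sum_le (n2_nonneg _) (n2_nonneg _) (n2_nonneg _)
      (by rw [sq_n2, sq_n2, sq_n2, hnsq_uT])
  have hs2 : Real.sqrt 2 * Real.sqrt 2 = 2 := Real.mul_self_sqrt (by norm_num)
  have hprod : (n2 v1 + n2 v2) * (n2 uT1 + n2 uT2) ≤ 2 * (n2 v * n2 uT) := by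
    calc (n2 v1 + n2 v2) * (n2 uT1 + n2 uT2)
        ≤ (Real.sqrt 2 * n2 v) * (Real.sqrt 2 * n2 uT) :=
          mul_le_mul hvs huts (add_nonneg (n2_nonneg _) (n2_nonneg _))
            (mul_nonneg (Real.sqrt_nonneg 2) (n2_nonneg _))
      _ = 2 * (n2 v * n2 uT) := by linear_combination (n2 v * n2 uT) * hs2
  have step2 : nsq v ≤ δk * n2 v * (n2 uS + 2 * n2 uT) := by
    have hp2 := mul_le_mul_of_nonneg_left hprod hδ0
    linarith [step1, hp2]
  -- sqrt 5 bound
  have h5 : n2 uS + 2 * n2 uT ≤ Real.sqrt 5 * n2 u :=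
    sqrt5_bound (n2_nonneg _) (n2_nonneg _) (n2_nonneg _)
      (by rw [sq_n2, sq_n2, sq_n2, hnsq_u])
  have step3 : nsq v ≤ δk * n2 v * (Real.sqrt 5 * n2 u) := by
    refine step2.trans (mul_le_mul_of_nonneg_left h5 ?_)
    exact mul_nonneg hδ0 (n2_nonneg _)
  -- conclude
  have hfin : (n2 v) ^ 2 ≤ (Real.sqrt 5 * δk * n2 u) * n2 v := by
    rw [sq_n2]
    calc nsq v ≤ δk * n2 v * (Real.sqrt 5 * n2 u) := step3
      _ = (Real.sqrt 5 * δk * n2 u) * n2 v := by ring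
  rcases eq_or_lt_of_le (n2_nonneg v) with hv0 | hv0
  · rw [← hv0]
    have : 0 ≤ Real.sqrt 5 * δk := mul_nonneg (Real.sqrt_nonneg 5) hδ0
    exact mul_nonneg this (n2_nonneg _)
  · have hfin' : n2 v * n2 v ≤ (Real.sqrt 5 * δk * n2 u) * n2 v :=
      le_of_le_of_eq (le_of_eq_of_le (pow_two (n2 v)).symm hfin) rfl
    exact le_of_mul_le_mul_right hfin' hv0
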